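/- Let d ≥ 1 be an integer and let s ≤ 0 ≤ k be real numbers. For a Schwartz function g : ℝ^d → ℂ define ‖g‖_{H^σ}² = ∫_{ℝ^d} (1+|ξ|²)^σ |ĝ(ξ)|² dξ, where ĝ(ξ) = ∫_{ℝ^d} e^{−i x·ξ} g(x) dx. Then there exist constants c > 0 and C > 0 such that for every Schwartz function f and every v ∈ ℝ^d with |v| ≥ 1, the modulated function f_v(x) = e^{−i v·x} f(x) satisfies ‖f_v‖_{H^s} ≥ c |v|^s ‖f‖_{L²} − C |v|^{s−k} ‖f‖_{H^k}. -/

import Mathlib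

open scoped RealInnerProductSpace

/-- The Fourier transform `ĝ(ξ) = ∫ e^{-i x·ξ} g(x) dx`. -/
noncomputable def fourierT {d : ℕ} (g : EuclideanSpace ℝ (Fin d) → ℂ)
    (ξ : EuclideanSpace ℝ (Fin d)) : ℂ :=
  ∫ x : EuclideanSpace ℝ (Fin d), Complex.exp (-(Complex.I * ((⟪x, ξ⟫ : ℝ) : ℂ))) * g x

/-- The Sobolev norm `‖g‖_{H^σ} = (∫ (1+|ξ|²)^σ |ĝ(ξ)|² dξ)^{1/2}`. -/
noncomputable def sobolevNorm {d : ℕ} (σ : ℝ) (g : EuclideanSpace ℝ (Fin d) → ℂ) : ℝ :=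
  Real.sqrt (∫ ξ : EuclideanSpace ℝ (Fin d), (1 + ‖ξ‖^2) ^ σ * ‖fourierT g ξ‖^2)

/-- The `L²` norm `‖g‖_{L²} = (∫ |g(x)|² dx)^{1/2}`. -/
noncomputable def l2Norm {d : ℕ} (g : EuclideanSpace ℝ (Fin d) → ℂ) : ℝ :=
  Real.sqrt (∫ x : EuclideanSpace ℝ (Fin d), ‖g x‖^2)

open scoped FourierTransform Real SchwartzMap
open MeasureTheory Complex

variable {d : ℕ}
lemma fourierT_eq (g : EuclideanSpace ℝ (Fin d) → ℂ) (ξ : EuclideanSpace ℝ (Fin d)) :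
    fourierT g ξ = 𝓕 g ((2 * π)⁻¹ • ξ) := by
  rw [Real.fourier_eq']
  unfold fourierT
  congr 1
  funext x
  rw [real_inner_smul_right, smul_eq_mul]
  have hπ : (2 * π) ≠ 0 := by positivity
  rw [show (-2 * π * ((2*π)⁻¹ * ⟪x, ξ⟫)) = -⟪x, ξ⟫ by field_simp]
  push_cast
  ring_nf

lemma fourierT_modulate (g : EuclideanSpace ℝ (Fin d) → ℂ) (v ξ : EuclideanSpace ℝ (Fin d)) :
    fourierT (fun x => Complex.exp (-(Complex.I * ((⟪v, x⟫ : ℝ) : ℂ))) * g x) ξ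
      = fourierT g (ξ + v) := by
  unfold fourierT
  congr 1
  funext x
  rw [← mul_assoc, ← Complex.exp_add, inner_add_right, real_inner_comm v x]
  push_cast
  ring_nf
lemma innerl_flip : (innerₗ (EuclideanSpace ℝ (Fin d))).flip = innerₗ (EuclideanSpace ℝ (Fin d)) := by
  apply LinearMap.ext_iff.2
  intro x
  apply LinearMap.ext_iff.2
  intro y
  simpa using real_inner_comm y x

lemma fourier_conj (h : EuclideanSpace ℝ (Fin d) → ℂ) (x : EuclideanSpace ℝ (Fin d)) :
    𝓕 (fun ξ => (starRingEnd ℂ) (h ξ)) x = (starRingEnd ℂ) (𝓕⁻ h x) := by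
  rw [Real.fourier_eq', Real.fourierInv_eq', ← integral_conj]
  congr 1
  funext v
  rw [smul_eq_mul, smul_eq_mul, map_mul, ← Complex.exp_conj]
  congr 2
  rw [map_mul, Complex.conj_ofReal, Complex.conj_I]
  push_cast
  ring

lemma plancherel (f : 𝓢(EuclideanSpace ℝ (Fin d), ℂ)) :
    ∫ ξ, ‖𝓕 (⇑f) ξ‖^2 = ∫ x, ‖f x‖^2 := by
  have hf : Integrable (⇑f) volume := f.integrable
  have hFs : ⇑(SchwartzMap.fourierTransformCLM ℂ f) = 𝓕 ⇑f := by
    rfl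
  have hF : Integrable (𝓕 ⇑f) volume := by
    rw [← hFs]; exact (SchwartzMap.fourierTransformCLM ℂ f).integrable
  have hFc : Integrable (fun ξ => (starRingEnd ℂ) (𝓕 (⇑f) ξ)) volume := by
    refine hF.norm.mono' (Complex.continuous_conj.comp_aestronglyMeasurable hF.1) ?_
    filter_upwards with x
    simp
  have key := VectorFourier.integral_fourierIntegral_smul_eq_flip
    (e := Real.fourierChar) (L := innerₗ (EuclideanSpace ℝ (Fin d)))
    (μ := volume) (ν := volume) (f := ⇑f) (g := fun ξ => (starRingEnd ℂ) (𝓕 (⇑f) ξ))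
    Real.continuous_fourierChar (by exact continuous_inner) hf hFc
  rw [innerl_flip] at key
  -- key : ∫ ξ, 𝓕 f ξ • conj (𝓕 f ξ) = ∫ x, f x • 𝓕 (conj ∘ 𝓕 f) x
  have inv : 𝓕⁻ (𝓕 ⇑f) = ⇑f := f.continuous.fourierInv_fourier_eq hf hF
  have : (∫ ξ, (𝓕 (⇑f) ξ) * (starRingEnd ℂ) (𝓕 (⇑f) ξ)) = ∫ x, (f x) * (starRingEnd ℂ) (f x) := by
    calc (∫ ξ, (𝓕 (⇑f) ξ) * (starRingEnd ℂ) (𝓕 (⇑f) ξ))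
        = ∫ x, (f x) * (𝓕 (fun ξ => (starRingEnd ℂ) (𝓕 (⇑f) ξ)) x) := key
      _ = ∫ x, (f x) * (starRingEnd ℂ) (f x) := by
          congr 1; funext x; rw [fourier_conj, inv]
  have lhs : (∫ ξ, (𝓕 (⇑f) ξ) * (starRingEnd ℂ) (𝓕 (⇑f) ξ))
      = ((∫ ξ, ‖𝓕 (⇑f) ξ‖^2 : ℝ) : ℂ) := by
    rw [show (fun ξ => (𝓕 (⇑f) ξ) * (starRingEnd ℂ) (𝓕 (⇑f) ξ))
        = fun ξ => ((‖𝓕 (⇑f) ξ‖^2 : ℝ) : ℂ) from funext fun ξ => by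
      rw [Complex.mul_conj']; push_cast; ring]
    exact integral_ofReal
  have rhs : (∫ x, (f x) * (starRingEnd ℂ) (f x)) = ((∫ x, ‖f x‖^2 : ℝ) : ℂ) := by
    rw [show (fun x => (f x) * (starRingEnd ℂ) (f x))
        = fun x => ((‖f x‖^2 : ℝ) : ℂ) from funext fun x => by
      rw [Complex.mul_conj']; push_cast; ring]
    exact integral_ofReal
  rw [lhs, rhs] at this
  exact_mod_cast this
lemma integrable_weight (g : 𝓢(EuclideanSpace ℝ (Fin d), ℂ)) (σ : ℝ) :
    Integrable (fun ξ : EuclideanSpace ℝ (Fin d) => (1 + ‖ξ‖ ^ 2) ^ σ * ‖g ξ‖ ^ 2) := by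
  set n := ⌈σ⌉₊ with hn
  have hσn : σ ≤ (n : ℝ) := Nat.le_ceil σ
  set M := (SchwartzMap.seminorm ℝ 0 0) g with hM
  have hMg : ∀ ξ, ‖g ξ‖ ≤ M := fun ξ => g.norm_le_seminorm ℝ ξ
  have hM0 : 0 ≤ M := le_trans (norm_nonneg _) (hMg 0)
  have hint : Integrable (fun ξ : EuclideanSpace ℝ (Fin d) =>
      2 ^ n * (M * ‖g ξ‖ + M * (‖ξ‖ ^ (2 * n) * ‖g ξ‖))) := by
    exact (((g.integrable.norm.const_mul M).add
      ((g.integrable_pow_mul volume (2 * n)).const_mul M)).const_mul (2 ^ n))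
  refine hint.mono' ?_ ?_
  · refine Continuous.aestronglyMeasurable (Continuous.mul ?_ (g.continuous.norm.pow 2))
    refine Continuous.rpow_const (by continuity) fun ξ => Or.inl (by positivity)
  · filter_upwards with ξ
    have hb : (0:ℝ) ≤ 1 + ‖ξ‖ ^ 2 := by positivity
    have h1 : (1 + ‖ξ‖ ^ 2) ^ σ ≤ (1 + ‖ξ‖ ^ 2) ^ (n : ℝ) :=
      Real.rpow_le_rpow_of_exponent_le (by nlinarith [sq_nonneg ‖ξ‖]) hσn
    rw [Real.rpow_natCast] at h1
    have h2 : (1 + ‖ξ‖ ^ 2) ^ n ≤ 2 ^ n * (1 + ‖ξ‖ ^ (2 * n)) := by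
      calc (1 + ‖ξ‖ ^ 2) ^ n ≤ 2 ^ (n - 1) * (1 ^ n + (‖ξ‖ ^ 2) ^ n) :=
            add_pow_le zero_le_one (by positivity) n
        _ ≤ 2 ^ n * (1 + ‖ξ‖ ^ (2 * n)) := by
            rw [one_pow, ← pow_mul]
            gcongr
            · exact one_le_two
            · exact Nat.sub_le n 1
  -- continue
    have h3 : ‖g ξ‖ ^ 2 ≤ M * ‖g ξ‖ := by
      rw [sq]
      exact mul_le_mul_of_nonneg_right (hMg ξ) (norm_nonneg _)
    have hrpow_nonneg : (0:ℝ) ≤ (1 + ‖ξ‖ ^ 2) ^ σ := Real.rpow_nonneg hb σ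
    rw [Real.norm_of_nonneg (by positivity)]
    calc (1 + ‖ξ‖ ^ 2) ^ σ * ‖g ξ‖ ^ 2
        ≤ (2 ^ n * (1 + ‖ξ‖ ^ (2 * n))) * (M * ‖g ξ‖) := by
          apply mul_le_mul (le_trans h1 h2) h3 (by positivity)
          positivity
      _ = 2 ^ n * (M * ‖g ξ‖ + M * (‖ξ‖ ^ (2 * n) * ‖g ξ‖)) := by ring

lemma integrable_normsq (g : 𝓢(EuclideanSpace ℝ (Fin d), ℂ)) :
    Integrable (fun ξ : EuclideanSpace ℝ (Fin d) => ‖g ξ‖ ^ 2) := by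
  have := integrable_weight g 0
  simpa using this
lemma core_ineq (s k : ℝ) (hs : s ≤ 0) (hk : 0 ≤ k)
    (G : EuclideanSpace ℝ (Fin d) → ℂ) (hGc : Continuous G)
    (hG2 : Integrable (fun ξ : EuclideanSpace ℝ (Fin d) => ‖G ξ‖ ^ 2))
    (hGk : Integrable (fun ξ : EuclideanSpace ℝ (Fin d) => (1 + ‖ξ‖ ^ 2) ^ k * ‖G ξ‖ ^ 2))
    (v : EuclideanSpace ℝ (Fin d)) (hv : 1 ≤ ‖v‖) :
    (4:ℝ) ^ s * ‖v‖ ^ (2*s) *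
      ((∫ ξ : EuclideanSpace ℝ (Fin d), ‖G ξ‖ ^ 2)
        - 4 ^ k * ‖v‖ ^ (-(2*k)) * ∫ ξ : EuclideanSpace ℝ (Fin d), (1 + ‖ξ‖ ^ 2) ^ k * ‖G ξ‖ ^ 2)
      ≤ ∫ ξ : EuclideanSpace ℝ (Fin d), (1 + ‖ξ - v‖ ^ 2) ^ s * ‖G ξ‖ ^ 2 := by
  have hv0 : (0:ℝ) < ‖v‖ := lt_of_lt_of_le one_pos hv
  set W : EuclideanSpace ℝ (Fin d) → ℝ := fun ξ => (1 + ‖ξ - v‖ ^ 2) ^ s * ‖G ξ‖ ^ 2 with hW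
  have hWc : Continuous W := by
    refine Continuous.mul ?_ (hGc.norm.pow 2)
    exact Continuous.rpow_const (by continuity) fun ξ => Or.inl (by positivity)
  have hWle : ∀ ξ, W ξ ≤ ‖G ξ‖ ^ 2 := by
    intro ξ
    have h1 : (1 + ‖ξ - v‖ ^ 2) ^ s ≤ 1 :=
      Real.rpow_le_one_of_one_le_of_nonpos (by nlinarith [sq_nonneg ‖ξ - v‖]) hs
    calc W ξ ≤ 1 * ‖G ξ‖ ^ 2 := mul_le_mul_of_nonneg_right h1 (by positivity)
      _ = ‖G ξ‖ ^ 2 := one_mul _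
  have hWnn : ∀ ξ, 0 ≤ W ξ := fun ξ => mul_nonneg (Real.rpow_nonneg (by positivity) s) (by positivity)
  have hWint : Integrable W :=
    hG2.mono' hWc.aestronglyMeasurable
      (Filter.Eventually.of_forall fun ξ => by rw [Real.norm_of_nonneg (hWnn ξ)]; exact hWle ξ)
  set B : Set (EuclideanSpace ℝ (Fin d)) := {ξ | ‖ξ‖ ≤ ‖v‖ / 2} with hB
  have hBm : MeasurableSet B := (isClosed_le continuous_norm continuous_const).measurableSet
  -- constant
  set c₁ : ℝ := (4:ℝ) ^ s * ‖v‖ ^ (2*s) with hc₁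
  have hc₁pos : 0 < c₁ := mul_pos (Real.rpow_pos_of_pos (by norm_num) s) (Real.rpow_pos_of_pos hv0 _)
  -- Step B : pointwise bound on B
  have hptB : ∀ ξ ∈ B, c₁ * ‖G ξ‖ ^ 2 ≤ W ξ := by
    intro ξ hξ
    have hξn : ‖ξ‖ ≤ ‖v‖ / 2 := hξ
    have h1 : ‖ξ - v‖ ≤ 3 / 2 * ‖v‖ := by
      calc ‖ξ - v‖ ≤ ‖ξ‖ + ‖v‖ := norm_sub_le ξ v
        _ ≤ 3 / 2 * ‖v‖ := by linarith
    have h2 : 1 + ‖ξ - v‖ ^ 2 ≤ 4 * ‖v‖ ^ 2 := by nlinarith [norm_nonneg (ξ - v), sq_nonneg ‖v‖]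
    have h3 : (4 * ‖v‖ ^ 2 : ℝ) ^ s ≤ (1 + ‖ξ - v‖ ^ 2) ^ s :=
      Real.rpow_le_rpow_of_nonpos (by positivity) h2 hs
    have h4 : (4 * ‖v‖ ^ 2 : ℝ) ^ s = c₁ := by
      rw [Real.mul_rpow (by norm_num) (by positivity), hc₁]
      congr 1
      rw [← Real.rpow_natCast ‖v‖ 2, ← Real.rpow_mul (norm_nonneg v)]
      norm_num
    rw [← h4]
    exact mul_le_mul_of_nonneg_right h3 (by positivity)
  -- Step D : pointwise bound on Bᶜ
  set c₂ : ℝ := (4:ℝ) ^ k * ‖v‖ ^ (-(2*k)) with hc₂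
  have hc₂nn : 0 ≤ c₂ := le_of_lt (mul_pos (Real.rpow_pos_of_pos (by norm_num) k) (Real.rpow_pos_of_pos hv0 _))
  have hptBc : ∀ ξ ∈ Bᶜ, ‖G ξ‖ ^ 2 ≤ c₂ * ((1 + ‖ξ‖ ^ 2) ^ k * ‖G ξ‖ ^ 2) := by
    intro ξ hξ
    have hξn : ‖v‖ / 2 < ‖ξ‖ := by simpa [B] using hξ
    have h1 : ‖v‖ ^ 2 / 4 ≤ 1 + ‖ξ‖ ^ 2 := by nlinarith [norm_nonneg ξ]
    have h2 : (‖v‖ ^ 2 / 4 : ℝ) ^ k ≤ (1 + ‖ξ‖ ^ 2) ^ k :=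
      Real.rpow_le_rpow (by positivity) h1 hk
    have h3 : c₂ * (‖v‖ ^ 2 / 4 : ℝ) ^ k = 1 := by
      have e1 : ((‖v‖ ^ 2 : ℝ) / 4) ^ k = ‖v‖ ^ (2 * k) / 4 ^ k := by
        rw [Real.div_rpow (by positivity) (by norm_num)]
        congr 1
        rw [← Real.rpow_natCast ‖v‖ 2, ← Real.rpow_mul (norm_nonneg v)]
        norm_num
      have e2 : ‖v‖ ^ (-(2 * k)) * ‖v‖ ^ (2 * k) = 1 := by
        rw [← Real.rpow_add hv0]; simp
      have e3 : (4:ℝ) ^ k ≠ 0 := ne_of_gt (Real.rpow_pos_of_pos (by norm_num) k)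
      have e4 : c₂ * (‖v‖ ^ 2 / 4 : ℝ) ^ k
          = (4 ^ k * ((4:ℝ) ^ k)⁻¹) * (‖v‖ ^ (-(2 * k)) * ‖v‖ ^ (2 * k)) := by
        rw [hc₂, e1]; ring
      rw [e4, e2, mul_inv_cancel₀ e3, one_mul]
    have : 1 ≤ c₂ * (1 + ‖ξ‖ ^ 2) ^ k := by
      have h5 := mul_le_mul_of_nonneg_left h2 hc₂nn
      rwa [h3] at h5
    calc ‖G ξ‖ ^ 2 = 1 * ‖G ξ‖ ^ 2 := (one_mul _).symm
      _ ≤ (c₂ * (1 + ‖ξ‖ ^ 2) ^ k) * ‖G ξ‖ ^ 2 := mul_le_mul_of_nonneg_right this (by positivity)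
      _ = c₂ * ((1 + ‖ξ‖ ^ 2) ^ k * ‖G ξ‖ ^ 2) := by ring
  -- chain of integral inequalities
  have step1 : ∫ ξ in B, W ξ ≤ ∫ ξ, W ξ :=
    setIntegral_le_integral hWint (Filter.Eventually.of_forall hWnn)
  have step2 : ∫ ξ in B, c₁ * ‖G ξ‖ ^ 2 ≤ ∫ ξ in B, W ξ :=
    setIntegral_mono_on ((hG2.const_mul c₁).integrableOn) hWint.integrableOn hBm hptB
  have step3 : ∫ ξ in B, c₁ * ‖G ξ‖ ^ 2 = c₁ * ∫ ξ in B, ‖G ξ‖ ^ 2 := integral_const_mul _ _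
  have step4 : (∫ ξ in B, ‖G ξ‖ ^ 2) = (∫ ξ, ‖G ξ‖ ^ 2) - ∫ ξ in Bᶜ, ‖G ξ‖ ^ 2 := by
    have := integral_add_compl hBm hG2
    linarith
  have step5 : ∫ ξ in Bᶜ, ‖G ξ‖ ^ 2 ≤ ∫ ξ in Bᶜ, c₂ * ((1 + ‖ξ‖ ^ 2) ^ k * ‖G ξ‖ ^ 2) :=
    setIntegral_mono_on hG2.integrableOn ((hGk.const_mul c₂).integrableOn) hBm.compl hptBc
  have step6 : ∫ ξ in Bᶜ, c₂ * ((1 + ‖ξ‖ ^ 2) ^ k * ‖G ξ‖ ^ 2)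
      ≤ ∫ ξ, c₂ * ((1 + ‖ξ‖ ^ 2) ^ k * ‖G ξ‖ ^ 2) := by
    refine setIntegral_le_integral (hGk.const_mul c₂) (Filter.Eventually.of_forall fun ξ => ?_)
    have : (0:ℝ) ≤ (1 + ‖ξ‖ ^ 2) ^ k := Real.rpow_nonneg (by positivity) k
    positivity
  have step7 : ∫ ξ, c₂ * ((1 + ‖ξ‖ ^ 2) ^ k * ‖G ξ‖ ^ 2)
      = c₂ * ∫ ξ, (1 + ‖ξ‖ ^ 2) ^ k * ‖G ξ‖ ^ 2 := integral_const_mul _ _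
  have final : c₁ * ((∫ ξ, ‖G ξ‖ ^ 2) - c₂ * ∫ ξ, (1 + ‖ξ‖ ^ 2) ^ k * ‖G ξ‖ ^ 2)
      ≤ ∫ ξ, W ξ := by
    have h5 : ∫ ξ in Bᶜ, ‖G ξ‖ ^ 2 ≤ c₂ * ∫ ξ, (1 + ‖ξ‖ ^ 2) ^ k * ‖G ξ‖ ^ 2 := by
      rw [← step7]; exact le_trans step5 step6
    have h6 : (∫ ξ, ‖G ξ‖ ^ 2) - c₂ * (∫ ξ, (1 + ‖ξ‖ ^ 2) ^ k * ‖G ξ‖ ^ 2) ≤ ∫ ξ in B, ‖G ξ‖ ^ 2 := by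
      rw [step4]; linarith
    calc c₁ * ((∫ ξ, ‖G ξ‖ ^ 2) - c₂ * ∫ ξ, (1 + ‖ξ‖ ^ 2) ^ k * ‖G ξ‖ ^ 2)
        ≤ c₁ * ∫ ξ in B, ‖G ξ‖ ^ 2 := mul_le_mul_of_nonneg_left h6 (le_of_lt hc₁pos)
      _ = ∫ ξ in B, c₁ * ‖G ξ‖ ^ 2 := step3.symm
      _ ≤ ∫ ξ in B, W ξ := step2
      _ ≤ ∫ ξ, W ξ := step1
  exact final
lemma sqrt_sub_le {S A B : ℝ} (hB : 0 ≤ B) (hS : 0 ≤ S) (h : A - B ≤ S) :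
    Real.sqrt A - Real.sqrt B ≤ Real.sqrt S := by
  have h1 : A ≤ B + S := by linarith
  have h2 : Real.sqrt A ≤ Real.sqrt (B + S) := Real.sqrt_le_sqrt h1
  have h3 : Real.sqrt (B + S) ≤ Real.sqrt B + Real.sqrt S := by
    have h4 : B + S ≤ (Real.sqrt B + Real.sqrt S) ^ 2 := by
      nlinarith [Real.sq_sqrt hB, Real.sq_sqrt hS, Real.sqrt_nonneg B, Real.sqrt_nonneg S]
    calc Real.sqrt (B + S) ≤ Real.sqrt ((Real.sqrt B + Real.sqrt S) ^ 2) := Real.sqrt_le_sqrt h4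
      _ = Real.sqrt B + Real.sqrt S := Real.sqrt_sq (by positivity)
  linarith

lemma rpow_sq {x : ℝ} (hx : 0 < x) (t : ℝ) : (x ^ t) ^ 2 = x ^ (2 * t) := by
  rw [sq, ← Real.rpow_add hx]
  ring_nf
theorem modulated_sobolev_lower_bound
    (d : ℕ) (hd : 1 ≤ d) (s k : ℝ) (hs : s ≤ 0) (hk : 0 ≤ k) :
    ∃ c C : ℝ, 0 < c ∧ 0 < C ∧
      ∀ (f : SchwartzMap (EuclideanSpace ℝ (Fin d)) ℂ) (v : EuclideanSpace ℝ (Fin d)),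
        1 ≤ ‖v‖ →
        c * ‖v‖ ^ s * l2Norm (fun x => f x) - C * ‖v‖ ^ (s - k) * sobolevNorm k (fun x => f x)
          ≤ sobolevNorm s (fun x => Complex.exp (-(Complex.I * ((⟪v, x⟫ : ℝ) : ℂ))) * f x) := by
  have hπ : (2 * π : ℝ) ≠ 0 := by positivity
  have hπinv : ((2 * π : ℝ)⁻¹ : ℝ) ≠ 0 := inv_ne_zero hπ
  have hPpos : (0:ℝ) < (2 * π) ^ d := by positivity
  refine ⟨(2:ℝ) ^ s * Real.sqrt ((2 * π) ^ d), (2:ℝ) ^ s * (2:ℝ) ^ k, ?_, ?_, ?_⟩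
  · exact mul_pos (Real.rpow_pos_of_pos two_pos s) (Real.sqrt_pos.2 hPpos)
  · exact mul_pos (Real.rpow_pos_of_pos two_pos s) (Real.rpow_pos_of_pos two_pos k)
  intro f v hv
  have hv0 : (0:ℝ) < ‖v‖ := lt_of_lt_of_le one_pos hv
  set F : 𝓢(EuclideanSpace ℝ (Fin d), ℂ) := SchwartzMap.fourierTransformCLM ℂ f with hFdef
  have hFs : ⇑F = 𝓕 ⇑f := by simp [hFdef, SchwartzMap.fourier_coe]
  set G : EuclideanSpace ℝ (Fin d) → ℂ := fourierT ⇑f with hGdef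
  have hGF : ∀ ξ, G ξ = F ((2 * π)⁻¹ • ξ) := by
    intro ξ
    rw [hGdef, fourierT_eq, ← hFs]
  -- (a) continuity
  have hGc : Continuous G := by
    have : G = fun ξ => F ((2 * π)⁻¹ • ξ) := funext hGF
    rw [this]
    exact F.continuous.comp (continuous_const_smul _)
  -- (b) integrability of ‖G‖²
  have hG2 : Integrable (fun ξ : EuclideanSpace ℝ (Fin d) => ‖G ξ‖ ^ 2) := by
    have heq : (fun ξ : EuclideanSpace ℝ (Fin d) => ‖G ξ‖ ^ 2)
        = fun ξ => (fun η => ‖F η‖ ^ 2) ((2 * π)⁻¹ • ξ) := by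
      funext ξ; rw [hGF]
    rw [heq]
    exact (integrable_normsq F).comp_smul hπinv
  -- (c) integrability of weighted ‖G‖²
  have hGk : Integrable (fun ξ : EuclideanSpace ℝ (Fin d) => (1 + ‖ξ‖ ^ 2) ^ k * ‖G ξ‖ ^ 2) := by
    have hsq : ((1:ℝ) ≤ (2 * π) ^ 2) := by nlinarith [Real.pi_gt_three]
    have hinner : Integrable (fun η : EuclideanSpace ℝ (Fin d) =>
        (1 + ‖(2 * π : ℝ) • η‖ ^ 2) ^ k * ‖F η‖ ^ 2) := by
      refine (((integrable_weight F k).const_mul (((2 * π : ℝ) ^ 2) ^ k)).mono' ?_ ?_)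
      · refine Continuous.aestronglyMeasurable (Continuous.mul ?_ (F.continuous.norm.pow 2))
        refine Continuous.rpow_const ?_ fun η => Or.inl (by positivity)
        exact continuous_const.add (((continuous_const_smul _).norm).pow 2)
      · filter_upwards with η
        have hb : (0:ℝ) ≤ 1 + ‖(2 * π : ℝ) • η‖ ^ 2 := by positivity
        have e1 : ‖(2 * π : ℝ) • η‖ ^ 2 = (2 * π) ^ 2 * ‖η‖ ^ 2 := by
          rw [norm_smul, mul_pow, Real.norm_eq_abs,
            abs_of_pos (show (0:ℝ) < 2 * π by positivity)]
        have e2 : 1 + ‖(2 * π : ℝ) • η‖ ^ 2 ≤ (2 * π) ^ 2 * (1 + ‖η‖ ^ 2) := by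
          rw [e1]; nlinarith [sq_nonneg ‖η‖]
        have e3 : (1 + ‖(2 * π : ℝ) • η‖ ^ 2) ^ k ≤ ((2 * π) ^ 2 * (1 + ‖η‖ ^ 2)) ^ k :=
          Real.rpow_le_rpow hb e2 hk
        have e4 : ((2 * π : ℝ) ^ 2 * (1 + ‖η‖ ^ 2)) ^ k
            = ((2 * π : ℝ) ^ 2) ^ k * (1 + ‖η‖ ^ 2) ^ k :=
          Real.mul_rpow (by positivity) (by positivity)
        rw [Real.norm_of_nonneg (by positivity)]
        calc (1 + ‖(2 * π : ℝ) • η‖ ^ 2) ^ k * ‖F η‖ ^ 2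
            ≤ (((2 * π : ℝ) ^ 2) ^ k * (1 + ‖η‖ ^ 2) ^ k) * ‖F η‖ ^ 2 := by
              apply mul_le_mul_of_nonneg_right _ (by positivity)
              rw [← e4]; exact e3
          _ = ((2 * π : ℝ) ^ 2) ^ k * ((1 + ‖η‖ ^ 2) ^ k * ‖F η‖ ^ 2) := by ring
    have heq : (fun ξ : EuclideanSpace ℝ (Fin d) => (1 + ‖ξ‖ ^ 2) ^ k * ‖G ξ‖ ^ 2)
        = fun ξ => (fun η => (1 + ‖(2 * π : ℝ) • η‖ ^ 2) ^ k * ‖F η‖ ^ 2) ((2 * π)⁻¹ • ξ) := by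
      funext ξ
      simp only
      rw [smul_smul, mul_inv_cancel₀ hπ, one_smul, hGF]
    rw [heq]
    exact hinner.comp_smul hπinv
  -- (d) Plancherel with scaling
  have hplanch : (∫ ξ : EuclideanSpace ℝ (Fin d), ‖G ξ‖ ^ 2)
      = (2 * π) ^ d * ∫ x : EuclideanSpace ℝ (Fin d), ‖f x‖ ^ 2 := by
    have h1 : (fun ξ : EuclideanSpace ℝ (Fin d) => ‖G ξ‖ ^ 2)
        = fun ξ => (fun η => ‖𝓕 (⇑f) η‖ ^ 2) ((2 * π)⁻¹ • ξ) := by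
      funext ξ
      rw [hGdef, fourierT_eq]
    rw [h1, MeasureTheory.Measure.integral_comp_smul volume (fun η : EuclideanSpace ℝ (Fin d) => ‖𝓕 (⇑f) η‖ ^ 2)
      ((2 * π)⁻¹), plancherel f]
    have hrank : Module.finrank ℝ (EuclideanSpace ℝ (Fin d)) = d := finrank_euclideanSpace_fin
    rw [hrank, inv_pow, inv_inv, abs_of_pos hPpos, smul_eq_mul]
  -- (e) modulation + translation
  have hmod : (∫ ξ : EuclideanSpace ℝ (Fin d), (1 + ‖ξ‖ ^ 2) ^ s *
        ‖fourierT (fun x => Complex.exp (-(Complex.I * ((⟪v, x⟫ : ℝ) : ℂ))) * f x) ξ‖ ^ 2)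
      = ∫ ξ : EuclideanSpace ℝ (Fin d), (1 + ‖ξ - v‖ ^ 2) ^ s * ‖G ξ‖ ^ 2 := by
    calc (∫ ξ : EuclideanSpace ℝ (Fin d), (1 + ‖ξ‖ ^ 2) ^ s *
          ‖fourierT (fun x => Complex.exp (-(Complex.I * ((⟪v, x⟫ : ℝ) : ℂ))) * f x) ξ‖ ^ 2)
        = ∫ ξ : EuclideanSpace ℝ (Fin d),
            (fun η => (1 + ‖η - v‖ ^ 2) ^ s * ‖G η‖ ^ 2) (ξ + v) := by
          congr 1
          funext ξ
          rw [fourierT_modulate]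
          simp only [add_sub_cancel_right]
          rfl
      _ = ∫ ξ : EuclideanSpace ℝ (Fin d), (1 + ‖ξ - v‖ ^ 2) ^ s * ‖G ξ‖ ^ 2 := by
          simpa using integral_add_right_eq_self
            (fun η => (1 + ‖η - v‖ ^ 2) ^ s * ‖G η‖ ^ 2) v
  -- abbreviations
  set L : ℝ := ∫ x : EuclideanSpace ℝ (Fin d), ‖f x‖ ^ 2 with hLdef
  set K : ℝ := ∫ ξ : EuclideanSpace ℝ (Fin d), (1 + ‖ξ‖ ^ 2) ^ k * ‖G ξ‖ ^ 2 with hKdef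
  set S : ℝ := ∫ ξ : EuclideanSpace ℝ (Fin d), (1 + ‖ξ - v‖ ^ 2) ^ s * ‖G ξ‖ ^ 2 with hSdef
  have hL0 : 0 ≤ L := integral_nonneg fun x => by positivity
  have hK0 : 0 ≤ K := integral_nonneg fun ξ => by
    have : (0:ℝ) ≤ (1 + ‖ξ‖ ^ 2) ^ k := Real.rpow_nonneg (by positivity) k
    positivity
  have hS0 : 0 ≤ S := integral_nonneg fun ξ => by
    have : (0:ℝ) ≤ (1 + ‖ξ - v‖ ^ 2) ^ s := Real.rpow_nonneg (by positivity) s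
    positivity
  have hcore := core_ineq s k hs hk G hGc hG2 hGk v hv
  rw [hplanch, ← hKdef, ← hSdef] at hcore
  -- identify norms
  have hsob_s : sobolevNorm s (fun x => Complex.exp (-(Complex.I * ((⟪v, x⟫ : ℝ) : ℂ))) * f x)
      = Real.sqrt S := by
    unfold sobolevNorm
    rw [← hmod]
  have hsob_k : sobolevNorm k (fun x => f x) = Real.sqrt K := rfl
  have hl2 : l2Norm (fun x => f x) = Real.sqrt L := rfl
  rw [hsob_s, hsob_k, hl2]
  -- set up A and B
  set A : ℝ := ((2:ℝ) ^ s * Real.sqrt ((2 * π) ^ d) * ‖v‖ ^ s) ^ 2 * L with hAdef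
  set B : ℝ := ((2:ℝ) ^ s * (2:ℝ) ^ k * ‖v‖ ^ (s - k)) ^ 2 * K with hBdef
  have hAB : A - B ≤ S := by
    have e4s : ((2:ℝ) ^ s) ^ 2 = (4:ℝ) ^ s := by
      rw [rpow_sq two_pos, show (4:ℝ) = (2:ℝ) ^ (2:ℝ) by
        rw [show ((2:ℝ):ℝ) = ((2:ℕ):ℝ) by norm_num, Real.rpow_natCast]; norm_num,
        ← Real.rpow_mul (by norm_num)]
    have e4k : ((2:ℝ) ^ k) ^ 2 = (4:ℝ) ^ k := by
      rw [rpow_sq two_pos, show (4:ℝ) = (2:ℝ) ^ (2:ℝ) by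
        rw [show ((2:ℝ):ℝ) = ((2:ℕ):ℝ) by norm_num, Real.rpow_natCast]; norm_num,
        ← Real.rpow_mul (by norm_num)]
    have eP : (Real.sqrt ((2 * π) ^ d)) ^ 2 = (2 * π) ^ d := Real.sq_sqrt (le_of_lt hPpos)
    have evs : (‖v‖ ^ s) ^ 2 = ‖v‖ ^ (2 * s) := rpow_sq hv0 s
    have evsk : (‖v‖ ^ (s - k)) ^ 2 = ‖v‖ ^ (2 * s) * ‖v‖ ^ (-(2 * k)) := by
      rw [rpow_sq hv0, ← Real.rpow_add hv0]
      ring_nf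
    have hA : A = 4 ^ s * ‖v‖ ^ (2 * s) * ((2 * π) ^ d * L) := by
      rw [hAdef, mul_pow, mul_pow, e4s, eP, evs]; ring
    have hB : B = 4 ^ s * ‖v‖ ^ (2 * s) * (4 ^ k * ‖v‖ ^ (-(2 * k)) * K) := by
      rw [hBdef, mul_pow, mul_pow, e4s, e4k, evsk]; ring
    calc A - B = 4 ^ s * ‖v‖ ^ (2 * s) * ((2 * π) ^ d * L - 4 ^ k * ‖v‖ ^ (-(2 * k)) * K) := by
          rw [hA, hB]; ring
      _ ≤ S := hcore
  have hfin := sqrt_sub_le (mul_nonneg (sq_nonneg _) hK0) hS0 hAB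
  have hsqA : Real.sqrt A = (2:ℝ) ^ s * Real.sqrt ((2 * π) ^ d) * ‖v‖ ^ s * Real.sqrt L := by
    rw [hAdef, Real.sqrt_mul (sq_nonneg _) L, Real.sqrt_sq (by positivity)]
  have hsqB : Real.sqrt B = (2:ℝ) ^ s * (2:ℝ) ^ k * ‖v‖ ^ (s - k) * Real.sqrt K := by
    rw [hBdef, Real.sqrt_mul (sq_nonneg _) K, Real.sqrt_sq (by positivity)]
  rw [hsqA, hsqB] at hfin
  linarith
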